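/- For every n ≥ 1: ‖Δs_n‖₂² ≤ (1 + χ^{−1}·C²)·‖p_{n−1}‖₂². -/

import Mathlib

open Filter RealInnerProductSpace

variable {H : Type*} [NormedAddCommGroup H] [InnerProductSpace ℝ H]

/-- `Wlt P n` is the span of `P 0, …, P (n-1)`; thus `Wlt P 0 = ⊥ = W_{-1}` and
`Wlt P (n+1)` is the space `W_n = span{P_0, …, P_n}`. -/
def Wlt (P : ℕ → H) (n : ℕ) : Submodule ℝ H := Submodule.span ℝ (P '' Set.Iio n)

/-- `Wtot P` is the space `W = ⋃ₙ Wₙ` of all polynomials. -/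
def Wtot (P : ℕ → H) : Submodule ℝ H := Submodule.span ℝ (Set.range P)

/-- The Sobolev inner product `⟨f, g⟩_S = ⟨f, g⟩₂ + χ⟨Δf, Δg⟩₂`. -/
noncomputable def innerS (Δ : H →ₗ[ℝ] H) (χ : ℝ) (f g : H) : ℝ :=
  ⟪ f, g ⟫ + χ * ⟪ Δ f, Δ g ⟫

/-- The Sobolev norm `‖f‖_S = √(‖f‖₂² + χ‖Δf‖₂²)`. -/
noncomputable def normS (Δ : H →ₗ[ℝ] H) (χ : ℝ) (f : H) : ℝ :=
  Real.sqrt (‖f‖ ^ 2 + χ * ‖Δ f‖ ^ 2)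

lemma Wlt_mono (P : ℕ → H) {m n : ℕ} (h : m ≤ n) : Wlt P m ≤ Wlt P n :=
  Submodule.span_mono (Set.image_mono (Set.Iio_subset_Iio h))

lemma Wlt_le_Wtot (P : ℕ → H) (n : ℕ) : Wlt P n ≤ Wtot P :=
  Submodule.span_mono (Set.image_subset_range _ _)

lemma P_mem_Wlt (P : ℕ → H) {i n : ℕ} (h : i < n) : P i ∈ Wlt P n :=
  Submodule.subset_span ⟨i, h, rfl⟩

lemma Δ_map_Wlt (P : ℕ → H) (Δ : H →ₗ[ℝ] H)
    (hΔ0 : Δ (P 0) = 0) (hΔsucc : ∀ n, Δ (P (n + 1)) = P n) :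
    ∀ m, ∀ u ∈ Wlt P (m + 1), Δ u ∈ Wlt P m := by
  intro m u hu
  refine Submodule.span_induction (p := fun x _ => Δ x ∈ Wlt P m) ?_ ?_ ?_ ?_ hu
  · rintro x ⟨i, hi, rfl⟩
    cases i with
    | zero => rw [hΔ0]; exact zero_mem _
    | succ j =>
      rw [hΔsucc]
      exact P_mem_Wlt P (by have := Set.mem_Iio.mp hi; omega)
  · simp
  · intro x y _ _ hx hy; rw [map_add]; exact add_mem hx hy
  · intro a x _ hx; rw [map_smul]; exact Submodule.smul_mem _ _ hx

lemma ker_Δ_Wlt (P : ℕ → H) (hP : LinearIndependent ℝ P) (Δ : H →ₗ[ℝ] H)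
    (hΔ0 : Δ (P 0) = 0) (hΔsucc : ∀ n, Δ (P (n + 1)) = P n) :
    ∀ m, ∀ u ∈ Wlt P m, Δ u = 0 → u ∈ Wlt P 1 := by
  intro m
  induction m with
  | zero =>
    intro u hu _
    have he : (P '' Set.Iio 0) = ∅ := by rw [show Set.Iio 0 = (∅ : Set ℕ) from Set.ext fun i => by simp]; simp
    rw [Wlt, he, Submodule.span_empty, Submodule.mem_bot] at hu
    rw [hu]; exact zero_mem _
  | succ m ih =>
    intro u hu hΔu
    cases m with
    | zero => exact hu
    | succ k =>
      have hIio : Set.Iio (k + 1 + 1) = insert (k + 1) (Set.Iio (k + 1)) := by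
        ext i
        simp only [Set.mem_Iio, Set.mem_insert_iff]
        omega
      have hins : (P '' Set.Iio (k + 1 + 1)) = insert (P (k + 1)) (P '' Set.Iio (k + 1)) := by
        rw [hIio, Set.image_insert_eq]
      rw [Wlt, hins, Submodule.mem_span_insert] at hu
      obtain ⟨a, z, hz, rfl⟩ := hu
      have hz' : z ∈ Wlt P (k + 1) := hz
      have hΔz : Δ z ∈ Wlt P k := Δ_map_Wlt P Δ hΔ0 hΔsucc k z hz'
      have heq : a • P k + Δ z = 0 := by
        rw [← hΔsucc k, ← map_smul, ← map_add]; exact hΔu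
      have ha : a = 0 := by
        by_contra ha
        have h1 : a • P k = -(Δ z) := eq_neg_of_add_eq_zero_left heq
        have h2 : P k = a⁻¹ • (-(Δ z)) := by
          rw [← h1, smul_smul, inv_mul_cancel₀ ha, one_smul]
        have h3 : P k ∈ Wlt P k := h2 ▸ Submodule.smul_mem _ _ (neg_mem hΔz)
        exact hP.notMem_span_image (Set.notMem_Iio.mpr le_rfl : k ∉ Set.Iio k) h3
      rw [ha, zero_smul, zero_add] at hΔu ⊢
      exact ih z hz' hΔu

/-- For `n ≥ 1`: `‖Δs_n‖₂² ≤ (1 + χ⁻¹C²)‖p_{n−1}‖₂²`. -/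
theorem statement10
    (P : ℕ → H) (hP : LinearIndependent ℝ P)
    (Δ G : H →ₗ[ℝ] H)
    (hΔ0 : Δ (P 0) = 0) (hΔsucc : ∀ n, Δ (P (n + 1)) = P n)
    (hGsym : ∀ u ∈ Wtot P, ∀ v ∈ Wtot P, ⟪ G u, v ⟫ = ⟪ u, G v ⟫)
    (hGinv : ∀ u ∈ Wtot P, Δ (G u) = u)
    (hGmap : ∀ n, ∀ u ∈ Wlt P (n + 1), G u ∈ Wlt P (n + 2))
    (C : ℝ) (hC : 0 < C)
    (hGbound : ∀ u ∈ Wtot P, ‖G u‖ ≤ C * ‖u‖)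
    (χ : ℝ) (hχ : 0 < χ)
    (p : ℕ → H)
    (hpmonic : ∀ n, p n - P n ∈ Wlt P n)
    (hportho : ∀ n, ∀ w ∈ Wlt P n, ⟪ p n, w ⟫ = 0)
    (s : ℕ → H)
    (hsmonic : ∀ n, s n - P n ∈ Wlt P n)
    (hsortho : ∀ n, ∀ w ∈ Wlt P n, innerS Δ χ (s n) w = 0)
    : ∀ n, 1 ≤ n →
      ‖Δ (s n)‖ ^ 2 ≤ (1 + χ⁻¹ * C ^ 2) * ‖p (n - 1)‖ ^ 2 := by
  intro n hn
  obtain ⟨m, rfl⟩ : ∃ m, n = m + 1 := ⟨n - 1, (Nat.succ_pred_eq_of_pos hn).symm⟩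
  simp only [Nat.add_sub_cancel]
  have hqW : p m ∈ Wlt P (m + 1) := by
    have h1 : p m = (p m - P m) + P m := by abel
    rw [h1]
    exact add_mem (Wlt_mono P (Nat.le_succ m) (hpmonic m)) (P_mem_Wlt P (Nat.lt_succ_self m))
  have hqtot : p m ∈ Wtot P := Wlt_le_Wtot P _ hqW
  set f := G (p m) with hfdef
  have hfW : f ∈ Wlt P (m + 2) := hGmap m (p m) hqW
  have hΔf : Δ f = p m := hGinv (p m) hqtot
  -- f is monic of degree m+1
  have hfm : f - P (m + 1) ∈ Wlt P (m + 1) := by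
    have hu : f - P (m + 1) ∈ Wlt P (m + 2) :=
      sub_mem hfW (P_mem_Wlt P (by omega))
    have hΔu : Δ (f - P (m + 1)) = p m - P m := by
      rw [map_sub, hΔf, hΔsucc]
    cases m with
    | zero =>
      have he : (P '' Set.Iio 0) = ∅ := by
        rw [show Set.Iio 0 = (∅ : Set ℕ) from Set.ext fun i => by simp]; simp
      have h0 : p 0 - P 0 = 0 := by
        have := hpmonic 0
        rw [Wlt, he, Submodule.span_empty, Submodule.mem_bot] at this
        exact this
      have : Δ (f - P 1) = 0 := by rw [hΔu, h0]
      exact ker_Δ_Wlt P hP Δ hΔ0 hΔsucc 2 _ hu this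
    | succ k =>
      have hΔuW : Δ (f - P (k + 2)) ∈ Wlt P (k + 1) := by
        rw [hΔu]; exact hpmonic (k + 1)
      set v := G (Δ (f - P (k + 2))) with hvdef
      have hvW : v ∈ Wlt P (k + 2) := hGmap k _ hΔuW
      have hker : Δ (f - P (k + 2) - v) = 0 := by
        rw [map_sub, hGinv _ (Wlt_le_Wtot P _ hΔuW), sub_self]
      have h1 : f - P (k + 2) - v ∈ Wlt P 1 :=
        ker_Δ_Wlt P hP Δ hΔ0 hΔsucc (k + 3) _
          (sub_mem hu (Wlt_mono P (by omega) hvW)) hker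
      have : f - P (k + 2) = (f - P (k + 2) - v) + v := by abel
      rw [this]
      exact add_mem (Wlt_mono P (by omega) h1) hvW
  -- difference with s (m+1)
  have hd : f - s (m + 1) ∈ Wlt P (m + 1) := by
    have h := sub_mem hfm (hsmonic (m + 1))
    have h2 : f - P (m + 1) - (s (m + 1) - P (m + 1)) = f - s (m + 1) := by abel
    rwa [h2] at h
  set d := f - s (m + 1) with hddef
  have hcross : ⟪ s (m + 1), d ⟫ + χ * ⟪ Δ (s (m + 1)), Δ d ⟫ = 0 :=
    hsortho (m + 1) d hd
  have hfs : f = s (m + 1) + d := by rw [hddef]; abel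
  have e1 : ‖f‖ ^ 2 = ‖s (m + 1)‖ ^ 2 + 2 * ⟪ s (m + 1), d ⟫ + ‖d‖ ^ 2 := by
    rw [hfs]; exact norm_add_sq_real _ _
  have e2 : ‖Δ f‖ ^ 2
      = ‖Δ (s (m + 1))‖ ^ 2 + 2 * ⟪ Δ (s (m + 1)), Δ d ⟫ + ‖Δ d‖ ^ 2 := by
    rw [hfs, map_add]; exact norm_add_sq_real _ _
  have hQle : ‖s (m + 1)‖ ^ 2 + χ * ‖Δ (s (m + 1))‖ ^ 2 ≤ ‖f‖ ^ 2 + χ * ‖Δ f‖ ^ 2 := by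
    rw [e1, e2]
    nlinarith [hcross, sq_nonneg ‖d‖, mul_nonneg hχ.le (sq_nonneg ‖Δ d‖)]
  have hfb : ‖f‖ ≤ C * ‖p m‖ := hGbound (p m) hqtot
  have hΔf2 : ‖Δ f‖ = ‖p m‖ := by rw [hΔf]
  have hkey : χ * ‖Δ (s (m + 1))‖ ^ 2 ≤ C ^ 2 * ‖p m‖ ^ 2 + χ * ‖p m‖ ^ 2 := by
    have h1 : ‖f‖ ^ 2 ≤ C ^ 2 * ‖p m‖ ^ 2 := by
      nlinarith [norm_nonneg f, norm_nonneg (p m), hC.le]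
    have hΔf3 : ‖Δ f‖ ^ 2 = ‖p m‖ ^ 2 := by rw [hΔf2]
    have hΔf4 : χ * ‖Δ f‖ ^ 2 = χ * ‖p m‖ ^ 2 := by rw [hΔf3]
    linarith [sq_nonneg ‖s (m + 1)‖, hQle, hΔf4]
  refine (mul_le_mul_iff_right₀ hχ).mp ?_
  have h2 : χ * ((1 + χ⁻¹ * C ^ 2) * ‖p m‖ ^ 2) = C ^ 2 * ‖p m‖ ^ 2 + χ * ‖p m‖ ^ 2 := by
    field_simp
    ring
  rw [h2]
  exact hkey
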